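/- Let σ > 0, let X be a random variable with the centered Gaussian law N(0,σ²), and let l : ℝ² → ℝ be continuously differentiable with bounded partial derivatives. If g : ℝ² → ℝ is bounded, differentiable in its first variable, and satisfies the Stein equation σ² · ∂₁g(x₁, x₂) − x₁ · g(x₁, x₂) = l(x₁, x₂) − E[l(X, x₂)] for all (x₁, x₂) ∈ ℝ², then g = f_l, where f_l(x₁, x₂) := −σ⁻² ∫₀¹ (2√(t(1−t)))⁻¹ · E[X · l(√t x₁ + √(1−t) X, x₂)] dt. In other words, f_l is the unique bounded solution of the Stein equation. -/

import Mathlib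

open MeasureTheory ProbabilityTheory

/-- Partial derivative of `f : ℝ × ℝ → ℝ` in its first variable. -/
noncomputable def pderiv1 (f : ℝ × ℝ → ℝ) (p : ℝ × ℝ) : ℝ :=
  deriv (fun y => f (y, p.2)) p.1

/-- Partial derivative of `f : ℝ × ℝ → ℝ` in its second variable. -/
noncomputable def pderiv2 (f : ℝ × ℝ → ℝ) (p : ℝ × ℝ) : ℝ :=
  deriv (fun y => f (p.1, y)) p.2

/-- The Stein solution
`f_l(x₁,x₂) = −σ⁻² ∫₀¹ (2√(t(1−t)))⁻¹ E[X l(√t x₁ + √(1−t) X, x₂)] dt`. -/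
noncomputable def steinSol {Ω : Type*} [MeasurableSpace Ω] (P : Measure Ω)
    (X : Ω → ℝ) (σ : ℝ) (l : ℝ × ℝ → ℝ) : ℝ × ℝ → ℝ :=
  fun p => -(σ ^ 2)⁻¹ *
    ∫ t in (0:ℝ)..1, (2 * Real.sqrt (t * (1 - t)))⁻¹ *
      ∫ ω, X ω * l (Real.sqrt t * p.1 + Real.sqrt (1 - t) * X ω, p.2) ∂P

namespace SteinAux

open Real
open scoped NNReal ENNReal

open Real
open scoped NNReal ENNReal

/-- The centered Gaussian density with variance `v`. -/
noncomputable def gpdf (v : ℝ) (y : ℝ) : ℝ :=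
  (Real.sqrt (2 * Real.pi * v))⁻¹ * Real.exp (-y ^ 2 / (2 * v))

lemma gpdf_eq {v : ℝ} (hv : 0 ≤ v) (y : ℝ) :
    gaussianPDFReal 0 v.toNNReal y = gpdf v y := by
  simp [gaussianPDFReal, gpdf, Real.coe_toNNReal v hv]

lemma continuous_gpdf (v : ℝ) : Continuous (gpdf v) := by
  unfold gpdf; fun_prop

lemma gpdf_nonneg (v : ℝ) (y : ℝ) : 0 ≤ gpdf v y := by
  unfold gpdf; positivity

lemma hasDerivAt_gpdf {v : ℝ} (hv : 0 < v) (y : ℝ) :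
    HasDerivAt (gpdf v) (-(y / v) * gpdf v y) y := by
  have harg : ∀ z : ℝ, -z ^ 2 / (2 * v) = -(2 * v)⁻¹ * z ^ 2 := by
    intro z; field_simp
  have h1 : HasDerivAt (fun z : ℝ => -(2 * v)⁻¹ * z ^ 2) (-(2 * v)⁻¹ * (2 * y)) y := by
    simpa using (hasDerivAt_pow 2 y).const_mul (-(2 * v)⁻¹)
  have h2 := (h1.exp).const_mul ((Real.sqrt (2 * Real.pi * v))⁻¹)
  have hfe : (fun z : ℝ => (Real.sqrt (2 * Real.pi * v))⁻¹ * Real.exp (-(2 * v)⁻¹ * z ^ 2))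
      = gpdf v := by
    funext z; rw [gpdf, harg]
  rw [hfe] at h2
  refine h2.congr_deriv ?_
  rw [gpdf, harg]
  field_simp

lemma integral_gpdf {v : ℝ} (hv : 0 < v) : ∫ y, gpdf v y = 1 := by
  have h : ∫ y, gpdf v y = ∫ y, gaussianPDFReal 0 v.toNNReal y := by
    congr 1; funext y; rw [gpdf_eq hv.le]
  rw [h, integral_gaussianPDFReal_eq_one 0 (by simpa using Real.toNNReal_pos.mpr hv)]

lemma integrable_pow_mul_gpdf {v : ℝ} (hv : 0 < v) (n : ℕ) :
    Integrable (fun y : ℝ => |y| ^ n * gpdf v y) := by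
  have hb : (0:ℝ) < (2 * v)⁻¹ := by positivity
  have h := (integrable_rpow_mul_exp_neg_mul_sq hb (s := (n : ℝ))
    (by exact lt_of_lt_of_le neg_one_lt_zero (Nat.cast_nonneg n))).abs
  have h2 : Integrable (fun y : ℝ => |y| ^ n * Real.exp (-(2 * v)⁻¹ * y ^ 2)) := by
    refine h.congr ?_
    filter_upwards with y
    rw [Real.rpow_natCast, abs_mul, abs_of_nonneg (Real.exp_pos _).le, abs_pow]
  have h3 := h2.const_mul ((Real.sqrt (2 * Real.pi * v))⁻¹)
  refine h3.congr ?_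
  filter_upwards with y
  rw [gpdf, show -y ^ 2 / (2 * v) = -(2 * v)⁻¹ * y ^ 2 by field_simp]
  ring

lemma one_add_pow_le (n : ℕ) {a : ℝ} (ha : 0 ≤ a) :
    (1 + a) ^ n ≤ 2 ^ n * (1 + a ^ n) := by
  rcases le_total a 1 with h | h
  · calc (1 + a) ^ n ≤ 2 ^ n := by
          apply pow_le_pow_left₀ (by linarith) (by linarith)
       _ ≤ 2 ^ n * (1 + a ^ n) := by
          nlinarith [pow_nonneg ha n, pow_pos (show (0:ℝ) < 2 by norm_num) n]
  · calc (1 + a) ^ n ≤ (2 * a) ^ n := by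
          apply pow_le_pow_left₀ (by linarith) (by linarith)
       _ = 2 ^ n * a ^ n := mul_pow 2 a n
       _ ≤ 2 ^ n * (1 + a ^ n) := by
          nlinarith [pow_pos (show (0:ℝ) < 2 by norm_num) n]

lemma integrable_one_add_pow_mul_gpdf {v : ℝ} (hv : 0 < v) (n : ℕ) :
    Integrable (fun y : ℝ => (1 + |y|) ^ n * gpdf v y) := by
  have hint : Integrable (fun y : ℝ => 2 ^ n * (|y| ^ 0 * gpdf v y + |y| ^ n * gpdf v y)) :=
    ((integrable_pow_mul_gpdf hv 0).add (integrable_pow_mul_gpdf hv n)).const_mul _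
  refine hint.mono' ?_ ?_
  · exact (((continuous_const.add continuous_abs).pow n).mul (continuous_gpdf v)).aestronglyMeasurable
  · filter_upwards with y
    have h1 := one_add_pow_le n (abs_nonneg y)
    have h2 := gpdf_nonneg v y
    have h4 := mul_le_mul_of_nonneg_right h1 h2
    rw [Real.norm_eq_abs, abs_of_nonneg (by positivity)]
    simp only [pow_zero, one_mul]
    nlinarith [h4]

lemma integrable_growth {v : ℝ} (hv : 0 < v) {h : ℝ → ℝ}
    (hm : AEStronglyMeasurable h (volume : Measure ℝ)) {M : ℝ} {n : ℕ}
    (hb : ∀ y, |h y| ≤ M * (1 + |y|) ^ n) :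
    Integrable (fun y : ℝ => h y * gpdf v y) := by
  have hM : 0 ≤ M := le_trans (abs_nonneg (h 0)) (by simpa using hb 0)
  refine ((integrable_one_add_pow_mul_gpdf hv n).const_mul M).mono'
    (hm.mul (continuous_gpdf v).aestronglyMeasurable) ?_
  filter_upwards with y
  have h2 := gpdf_nonneg v y
  rw [Real.norm_eq_abs, abs_mul, abs_of_nonneg h2]
  calc |h y| * gpdf v y ≤ (M * (1 + |y|) ^ n) * gpdf v y :=
        mul_le_mul_of_nonneg_right (hb y) h2
    _ = M * ((1 + |y|) ^ n * gpdf v y) := by ring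

/-- Gaussian integration by parts: `∫ y ψ(y) ρ(y) dy = v ∫ ψ'(y) ρ(y) dy`. -/
lemma gauss_ibp {v : ℝ} (hv : 0 < v) {ψ ψ' : ℝ → ℝ}
    (hd : ∀ y, HasDerivAt ψ (ψ' y) y)
    (hm' : AEStronglyMeasurable ψ' (volume : Measure ℝ)) {M : ℝ}
    (hψ : ∀ y, |ψ y| ≤ M * (1 + |y|) ^ 2) (hψ' : ∀ y, |ψ' y| ≤ M * (1 + |y|) ^ 2) :
    ∫ y, y * ψ y * gpdf v y = v * ∫ y, ψ' y * gpdf v y := by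
  have hvne : v ≠ 0 := ne_of_gt hv
  have hM : 0 ≤ M := le_trans (abs_nonneg (ψ 0)) (by simpa using hψ 0)
  have hdiff : Differentiable ℝ ψ := fun y => (hd y).differentiableAt
  have hψcont : Continuous ψ := hdiff.continuous
  have hρd : ∀ y : ℝ, HasDerivAt (fun z => -v * gpdf v z) (y * gpdf v y) y := by
    intro y
    have := (hasDerivAt_gpdf hv y).const_mul (-v)
    refine this.congr_deriv ?_
    field_simp
  have habs : ∀ y : ℝ, |y| ≤ 1 + |y| := fun y => by linarith [abs_nonneg y]
  have h1 : Integrable (fun y => ψ y * (y * gpdf v y)) := by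
    have hi := integrable_growth hv (h := fun y => ψ y * y)
      (hψcont.mul continuous_id).aestronglyMeasurable (M := M) (n := 3)
      (fun y => by
        rw [abs_mul]
        calc |ψ y| * |y| ≤ (M * (1 + |y|) ^ 2) * (1 + |y|) :=
              mul_le_mul (hψ y) (habs y) (abs_nonneg y) (by positivity)
          _ = M * (1 + |y|) ^ 3 := by ring)
    refine hi.congr ?_
    filter_upwards with y; ring
  have h2 : Integrable (fun y => ψ' y * (-v * gpdf v y)) := by
    have hi := integrable_growth hv (h := fun y => ψ' y * (-v))
      (hm'.mul aestronglyMeasurable_const) (M := M * v) (n := 2)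
      (fun y => by
        rw [abs_mul, abs_neg, abs_of_pos hv]
        nlinarith [hψ' y, sq_nonneg (1 + |y|)])
    refine hi.congr ?_
    filter_upwards with y; ring
  have h3 : Integrable (fun y => ψ y * (-v * gpdf v y)) := by
    have hi := integrable_growth hv (h := fun y => ψ y * (-v))
      (hψcont.mul continuous_const).aestronglyMeasurable (M := M * v) (n := 2)
      (fun y => by
        rw [abs_mul, abs_neg, abs_of_pos hv]
        nlinarith [hψ y, sq_nonneg (1 + |y|)])
    refine hi.congr ?_
    filter_upwards with y; ring
  have key := integral_mul_deriv_eq_deriv_mul_of_integrable (fun y _ => hd y) (fun y _ => hρd y) h1 h2 h3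
  have e1 : (fun y => ψ y * (y * gpdf v y)) = fun y => y * ψ y * gpdf v y := by
    funext y; ring
  have e2 : (fun y => ψ' y * (-v * gpdf v y)) = fun y => -v * (ψ' y * gpdf v y) := by
    funext y; ring
  rw [e1] at key
  rw [e2, integral_const_mul] at key
  rw [key]; ring


lemma integral_gauss_transfer {v : ℝ} (hv : 0 < v) (f : ℝ → ℝ) :
    ∫ y, f y ∂(gaussianReal 0 v.toNNReal) = ∫ y, f y * gpdf v y := by
  have hvne : v.toNNReal ≠ 0 := by
    simpa using Real.toNNReal_pos.mpr hv
  rw [gaussianReal_of_var_ne_zero 0 hvne]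
  have hrw : (gaussianPDF 0 v.toNNReal) =
      fun y => (((fun y => (gaussianPDFReal 0 v.toNNReal y).toNNReal) y : ℝ≥0) : ℝ≥0∞) := rfl
  rw [hrw, integral_withDensity_eq_integral_smul
    ((measurable_gaussianPDFReal 0 v.toNNReal).real_toNNReal) f]
  congr 1; funext y
  rw [NNReal.smul_def, Real.coe_toNNReal _ (gaussianPDFReal_nonneg _ _ _),
    gpdf_eq hv.le, smul_eq_mul, mul_comm]

lemma integral_id_mul_gpdf {v : ℝ} (hv : 0 < v) : ∫ y, y * gpdf v y = 0 := by
  have h := gauss_ibp hv (ψ := fun _ => (1:ℝ)) (ψ' := fun _ => (0:ℝ))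
    (fun y => hasDerivAt_const y 1) aestronglyMeasurable_const (M := 1)
    (fun y => by rw [abs_one]; nlinarith [abs_nonneg y, sq_nonneg |y|])
    (fun y => by simp; positivity)
  simpa using h

lemma grow1 {K a b y w : ℝ} (hK : 0 ≤ K) (h : |w| ≤ K * (1 + |a + b * y|)) :
    |w| ≤ K * (1 + |a| + |b|) * (1 + |y|) := by
  have h1 : |a + b * y| ≤ |a| + |b| * |y| := by
    calc |a + b * y| ≤ |a| + |b * y| := abs_add_le _ _
      _ = |a| + |b| * |y| := by rw [abs_mul]
  nlinarith [mul_nonneg hK (abs_nonneg y), mul_nonneg (mul_nonneg hK (abs_nonneg a)) (abs_nonneg y),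
    mul_nonneg hK (abs_nonneg b), mul_nonneg hK (mul_nonneg (abs_nonneg b) (abs_nonneg y))]

lemma steinAlg (v s r A B C x : ℝ) (hv : v ≠ 0) (hs : s ≠ 0) (hr : r ≠ 0) :
    -v⁻¹ * ((2 * (s * r))⁻¹ * (v * (s * s) * B - v * (s * r) * x * A - v * r * C))
      = 1 / (2 * s) * C + s * (x / (2 * s) * A - (2 * r)⁻¹ * B) := by
  field_simp
  ring

set_option maxHeartbeats 2000000 in
theorem key {v : ℝ} (hv : 0 < v) (L L' G : ℝ → ℝ) (c C1 Cg : ℝ)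
    (hL' : ∀ y, HasDerivAt L (L' y) y) (hL'c : Continuous L')
    (hL'b : ∀ y, |L' y| ≤ C1) (hGb : ∀ y, |G y| ≤ Cg)
    (hG : ∀ y, HasDerivAt G (v⁻¹ * (L y - c + y * G y)) y) (x : ℝ) :
    G x = -v⁻¹ * ∫ t in (0:ℝ)..1, (2 * Real.sqrt (t * (1 - t)))⁻¹ *
      ∫ y, y * L (Real.sqrt t * x + Real.sqrt (1 - t) * y) * gpdf v y := by
  have hvne : v ≠ 0 := ne_of_gt hv
  have hC1 : 0 ≤ C1 := le_trans (abs_nonneg _) (hL'b 0)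
  have hCg : 0 ≤ Cg := le_trans (abs_nonneg _) (hGb 0)
  have hGdiff : Differentiable ℝ G := fun y => (hG y).differentiableAt
  have hGc : Continuous G := hGdiff.continuous
  have hLdiff : Differentiable ℝ L := fun y => (hL' y).differentiableAt
  have hLc : Continuous L := hLdiff.continuous
  set G' : ℝ → ℝ := fun y => v⁻¹ * (L y - c + y * G y) with hG'def
  have hG'c : Continuous G' := by
    rw [hG'def]; fun_prop
  have hGder : ∀ y, HasDerivAt G (G' y) y := hG
  have hρc : Continuous (gpdf v) := continuous_gpdf v
  have hρnn : ∀ y, 0 ≤ gpdf v y := gpdf_nonneg v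
  -- linear growth of L
  have hLb : ∀ y, |L y| ≤ (|L 0| + C1) * (1 + |y|) := by
    intro y
    have h0 : ‖L y - L 0‖ ≤ C1 * ‖y - 0‖ :=
      (convex_univ).norm_image_sub_le_of_norm_hasDerivWithin_le
        (fun z _ => (hL' z).hasDerivWithinAt)
        (fun z _ => by simpa [Real.norm_eq_abs] using hL'b z)
        (Set.mem_univ 0) (Set.mem_univ y)
    simp only [Real.norm_eq_abs, sub_zero] at h0
    have h1 := abs_sub_abs_le_abs_sub (L y) (L 0)
    nlinarith [abs_nonneg y, abs_nonneg (L 0), mul_nonneg hC1 (abs_nonneg y)]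
  set KL : ℝ := |L 0| + C1 with hKLdef
  have hKL : 0 ≤ KL := by rw [hKLdef]; positivity
  -- linear growth of G'
  set K2 : ℝ := v⁻¹ * (KL + |c| + Cg) with hK2def
  have hK2 : 0 ≤ K2 :=
    mul_nonneg (inv_pos.mpr hv).le (by positivity)
  have hG'b : ∀ y, |G' y| ≤ K2 * (1 + |y|) := by
    intro y
    have h1 : |L y - c + y * G y| ≤ |L y| + |c| + |y| * |G y| := by
      calc |L y - c + y * G y| ≤ |L y - c| + |y * G y| := abs_add_le _ _
        _ ≤ (|L y| + |c|) + |y| * |G y| := by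
            rw [abs_mul]; exact add_le_add (abs_sub _ _) le_rfl
        _ = |L y| + |c| + |y| * |G y| := by ring
    have h2 : |G' y| = v⁻¹ * |L y - c + y * G y| := by
      rw [hG'def, abs_mul, abs_of_pos (inv_pos.mpr hv)]
    have h3 := hLb y
    have h4 := mul_le_mul_of_nonneg_left (hGb y) (abs_nonneg y)
    rw [h2, hK2def]
    have h5 : |L y - c + y * G y| ≤ (KL + |c| + Cg) * (1 + |y|) := by
      rw [hKLdef]
      nlinarith [abs_nonneg y, mul_nonneg (abs_nonneg c) (abs_nonneg y), hCg,
        mul_nonneg hCg (abs_nonneg y)]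
    calc v⁻¹ * |L y - c + y * G y| ≤ v⁻¹ * ((KL + |c| + Cg) * (1 + |y|)) :=
          mul_le_mul_of_nonneg_left h5 (inv_pos.mpr hv).le
      _ = v⁻¹ * (KL + |c| + Cg) * (1 + |y|) := by ring
  -- chain rules
  have hchainG : ∀ a b y : ℝ, HasDerivAt (fun z => G (a + b * z)) (b * G' (a + b * y)) y := by
    intro a b y
    have h1 : HasDerivAt (fun z : ℝ => a + b * z) b y := by
      simpa using ((hasDerivAt_id y).const_mul b).const_add a
    have := (hGder (a + b * y)).comp y h1
    simpa [Function.comp_def, mul_comm] using this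
  have hchainL : ∀ a b y : ℝ, HasDerivAt (fun z => L (a + b * z)) (b * L' (a + b * y)) y := by
    intro a b y
    have h1 : HasDerivAt (fun z : ℝ => a + b * z) b y := by
      simpa using ((hasDerivAt_id y).const_mul b).const_add a
    have := (hL' (a + b * y)).comp y h1
    simpa [Function.comp_def, mul_comm] using this
  have h1pow : ∀ y : ℝ, 1 ≤ (1 + |y|) ^ 2 := by
    intro y; nlinarith [abs_nonneg y]
  -- IBP instances
  have ibpG : ∀ a b : ℝ, ∫ y, y * G (a + b * y) * gpdf v y
      = v * (b * ∫ y, G' (a + b * y) * gpdf v y) := by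
    intro a b
    have hT : 0 ≤ |b| * K2 * (1 + |a| + |b|) :=
      mul_nonneg (mul_nonneg (abs_nonneg b) hK2) (by positivity)
    have hψ'b : ∀ y, |b * G' (a + b * y)| ≤ |b| * K2 * (1 + |a| + |b|) * (1 + |y|) := by
      intro y
      have h1 : |b * G' (a + b * y)| ≤ |b| * K2 * (1 + |a + b * y|) := by
        rw [abs_mul]
        calc |b| * |G' (a + b * y)| ≤ |b| * (K2 * (1 + |a + b * y|)) :=
              mul_le_mul_of_nonneg_left (hG'b _) (abs_nonneg b)
          _ = |b| * K2 * (1 + |a + b * y|) := by ring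
      exact grow1 (mul_nonneg (abs_nonneg b) hK2) h1
    have h := gauss_ibp hv (ψ := fun y => G (a + b * y)) (ψ' := fun y => b * G' (a + b * y))
      (hchainG a b)
      ((continuous_const.mul (hG'c.comp (by fun_prop))).aestronglyMeasurable)
      (M := Cg + |b| * K2 * (1 + |a| + |b|))
      (fun y => by nlinarith [hGb (a + b * y), h1pow y, hT])
      (fun y => by
        have := hψ'b y
        nlinarith [hT, abs_nonneg y, mul_nonneg hT (abs_nonneg y),
          mul_nonneg (mul_nonneg hT (abs_nonneg y)) (abs_nonneg y), hCg, h1pow y])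
    rw [h]
    congr 1
    rw [show (fun y => b * G' (a + b * y) * gpdf v y)
      = fun y => b * (G' (a + b * y) * gpdf v y) from funext fun y => by ring,
      integral_const_mul]
  have ibpL : ∀ a b : ℝ, ∫ y, y * L (a + b * y) * gpdf v y
      = v * (b * ∫ y, L' (a + b * y) * gpdf v y) := by
    intro a b
    have hLab : ∀ y, |L (a + b * y)| ≤ KL * (1 + |a| + |b|) * (1 + |y|) := by
      intro y
      exact grow1 hKL (by simpa [hKLdef] using hLb (a + b * y))
    have h := gauss_ibp hv (ψ := fun y => L (a + b * y)) (ψ' := fun y => b * L' (a + b * y))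
      (hchainL a b)
      ((continuous_const.mul (hL'c.comp (by fun_prop))).aestronglyMeasurable)
      (M := KL * (1 + |a| + |b|) + |b| * C1)
      (fun y => by
        have := hLab y
        nlinarith [mul_nonneg (mul_nonneg hKL (by positivity : (0:ℝ) ≤ 1 + |a| + |b|)) (abs_nonneg y),
          mul_nonneg (abs_nonneg b) hC1, h1pow y, abs_nonneg y,
          mul_nonneg (mul_nonneg hKL (by positivity : (0:ℝ) ≤ 1 + |a| + |b|))
            (mul_nonneg (abs_nonneg y) (abs_nonneg y))])
      (fun y => by
        have h1 : |b * L' (a + b * y)| ≤ |b| * C1 := by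
          rw [abs_mul]; exact mul_le_mul_of_nonneg_left (hL'b _) (abs_nonneg b)
        nlinarith [h1pow y, mul_nonneg (abs_nonneg b) hC1,
          mul_le_mul_of_nonneg_left (h1pow y) (mul_nonneg (abs_nonneg b) hC1),
          mul_nonneg (mul_nonneg hKL (by positivity : (0:ℝ) ≤ 1 + |a| + |b|))
            (le_trans zero_le_one (h1pow y))])
    rw [h]
    congr 1
    rw [show (fun y => b * L' (a + b * y) * gpdf v y)
      = fun y => b * (L' (a + b * y) * gpdf v y) from funext fun y => by ring,
      integral_const_mul]
  have ibpyG : ∀ a b : ℝ, ∫ y, y * (y * G (a + b * y)) * gpdf v y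
      = v * ((∫ y, G (a + b * y) * gpdf v y) + b * ∫ y, y * G' (a + b * y) * gpdf v y) := by
    intro a b
    have hT : 0 ≤ |b| * K2 * (1 + |a| + |b|) :=
      mul_nonneg (mul_nonneg (abs_nonneg b) hK2) (by positivity)
    have hψ'b : ∀ y, |b * G' (a + b * y)| ≤ |b| * K2 * (1 + |a| + |b|) * (1 + |y|) := by
      intro y
      have h1 : |b * G' (a + b * y)| ≤ |b| * K2 * (1 + |a + b * y|) := by
        rw [abs_mul]
        calc |b| * |G' (a + b * y)| ≤ |b| * (K2 * (1 + |a + b * y|)) :=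
              mul_le_mul_of_nonneg_left (hG'b _) (abs_nonneg b)
          _ = |b| * K2 * (1 + |a + b * y|) := by ring
      exact grow1 (mul_nonneg (abs_nonneg b) hK2) h1
    have hd : ∀ y, HasDerivAt (fun z => z * G (a + b * z))
        (G (a + b * y) + y * (b * G' (a + b * y))) y := by
      intro y
      have := (hasDerivAt_id y).mul (hchainG a b y)
      simpa [Pi.mul_def] using this
    have h := gauss_ibp hv (ψ := fun y => y * G (a + b * y))
      (ψ' := fun y => G (a + b * y) + y * (b * G' (a + b * y))) hd
      ((hGc.comp (by fun_prop : Continuous fun y : ℝ => a + b * y)).add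
        (continuous_id.mul (continuous_const.mul (hG'c.comp (by fun_prop))))).aestronglyMeasurable
      (M := Cg + |b| * K2 * (1 + |a| + |b|))
      (fun y => by
        rw [abs_mul]
        have e1 : |y| * |G (a + b * y)| ≤ Cg * |y| := by
          rw [mul_comm]; exact mul_le_mul_of_nonneg_right (hGb _) (abs_nonneg y)
        have e2 : Cg * |y| ≤ Cg * (1 + |y|) ^ 2 :=
          mul_le_mul_of_nonneg_left (by nlinarith [abs_nonneg y]) hCg
        nlinarith [mul_nonneg hT (le_trans zero_le_one (h1pow y))])
      (fun y => by
        have h1 := hψ'b y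
        have h2 : |G (a + b * y) + y * (b * G' (a + b * y))|
            ≤ Cg + |y| * (|b| * K2 * (1 + |a| + |b|) * (1 + |y|)) := by
          calc |G (a + b * y) + y * (b * G' (a + b * y))|
              ≤ |G (a + b * y)| + |y| * |b * G' (a + b * y)| := by
                rw [← abs_mul]; exact abs_add_le _ _
            _ ≤ Cg + |y| * (|b| * K2 * (1 + |a| + |b|) * (1 + |y|)) :=
                add_le_add (hGb _) (mul_le_mul_of_nonneg_left h1 (abs_nonneg y))
        nlinarith [abs_nonneg y, hT, mul_nonneg hT (abs_nonneg y), hCg,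
          mul_nonneg (mul_nonneg hT (abs_nonneg y)) (abs_nonneg y), h1pow y])
    rw [h]
    congr 1
    have i1 : Integrable (fun y => G (a + b * y) * gpdf v y) :=
      integrable_growth hv ((hGc.comp (by fun_prop : Continuous fun y : ℝ => a + b * y)).aestronglyMeasurable)
        (M := Cg) (n := 0) (fun y => by simpa using hGb (a + b * y))
    have i2 : Integrable (fun y => y * (b * G' (a + b * y)) * gpdf v y) := by
      refine integrable_growth hv ?_ (M := |b| * K2 * (1 + |a| + |b|)) (n := 2) ?_
      · exact (continuous_id.mul (continuous_const.mul (hG'c.comp (by fun_prop)))).aestronglyMeasurable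
      · intro y
        rw [abs_mul]
        calc |y| * |b * G' (a + b * y)| ≤ (1 + |y|) * (|b| * K2 * (1 + |a| + |b|) * (1 + |y|)) := by
              apply mul_le_mul (by linarith [abs_nonneg y]) (hψ'b y) (abs_nonneg _) (by positivity)
          _ = |b| * K2 * (1 + |a| + |b|) * (1 + |y|) ^ 2 := by ring
    rw [show (fun y => (G (a + b * y) + y * (b * G' (a + b * y))) * gpdf v y)
      = fun y => G (a + b * y) * gpdf v y + y * (b * G' (a + b * y)) * gpdf v y from
      funext fun y => by ring, integral_add i1 i2]
    congr 1
    rw [show (fun y => y * (b * G' (a + b * y)) * gpdf v y)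
      = fun y => b * (y * G' (a + b * y) * gpdf v y) from funext fun y => by ring,
      integral_const_mul]

  -- bound on the interpolation argument
  have hYb : ∀ t ∈ Set.Icc (0:ℝ) 1, ∀ y : ℝ,
      |Real.sqrt t * x + Real.sqrt (1 - t) * y| ≤ |x| + |y| := by
    rintro t ⟨h0, h1⟩ y
    have e1 : Real.sqrt t ≤ 1 := Real.sqrt_le_one.mpr h1
    have e2 : Real.sqrt (1 - t) ≤ 1 := Real.sqrt_le_one.mpr (by linarith)
    have p1 : 0 ≤ Real.sqrt t := Real.sqrt_nonneg t
    have p2 : 0 ≤ Real.sqrt (1 - t) := Real.sqrt_nonneg _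
    calc |Real.sqrt t * x + Real.sqrt (1 - t) * y|
        ≤ |Real.sqrt t * x| + |Real.sqrt (1 - t) * y| := abs_add_le _ _
      _ = Real.sqrt t * |x| + Real.sqrt (1 - t) * |y| := by
          rw [abs_mul, abs_mul, abs_of_nonneg p1, abs_of_nonneg p2]
      _ ≤ |x| + |y| := by nlinarith [abs_nonneg x, abs_nonneg y]
  set φ : ℝ → ℝ := fun t => ∫ y, G (Real.sqrt t * x + Real.sqrt (1 - t) * y) * gpdf v y
    with hφdef
  set Φ1 : ℝ → ℝ := fun t => ∫ y, G' (Real.sqrt t * x + Real.sqrt (1 - t) * y) * gpdf v y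
    with hΦ1def
  set Φ2 : ℝ → ℝ := fun t => ∫ y, y * G' (Real.sqrt t * x + Real.sqrt (1 - t) * y) * gpdf v y
    with hΦ2def
  set J : ℝ → ℝ := fun t => ∫ y, y * L (Real.sqrt t * x + Real.sqrt (1 - t) * y) * gpdf v y
    with hJdef
  -- integrability of the various integrands
  have iG' : ∀ t ∈ Set.Icc (0:ℝ) 1, Integrable (fun y : ℝ =>
      G' (Real.sqrt t * x + Real.sqrt (1 - t) * y) * gpdf v y) := by
    intro t ht
    refine integrable_growth hv ((hG'c.comp (by fun_prop)).aestronglyMeasurable)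
      (M := K2 * (1 + |x|)) (n := 1) (fun y => ?_)
    have h1 := hG'b (Real.sqrt t * x + Real.sqrt (1 - t) * y)
    have h2 := hYb t ht y
    nlinarith [mul_le_mul_of_nonneg_left h2 hK2,
      mul_nonneg (mul_nonneg hK2 (abs_nonneg x)) (abs_nonneg y)]
  have iyG' : ∀ t ∈ Set.Icc (0:ℝ) 1, Integrable (fun y : ℝ =>
      y * G' (Real.sqrt t * x + Real.sqrt (1 - t) * y) * gpdf v y) := by
    intro t ht
    refine integrable_growth hv
      ((continuous_id.mul (hG'c.comp (by fun_prop))).aestronglyMeasurable)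
      (M := K2 * (1 + |x|)) (n := 2) (fun y => ?_)
    have h1 := hG'b (Real.sqrt t * x + Real.sqrt (1 - t) * y)
    have h2 := hYb t ht y
    have h3 : |G' (Real.sqrt t * x + Real.sqrt (1 - t) * y)| ≤ K2 * (1 + |x|) * (1 + |y|) := by
      nlinarith [mul_le_mul_of_nonneg_left h2 hK2,
        mul_nonneg (mul_nonneg hK2 (abs_nonneg x)) (abs_nonneg y)]
    rw [abs_mul]
    calc |y| * |G' (Real.sqrt t * x + Real.sqrt (1 - t) * y)|
        ≤ (1 + |y|) * (K2 * (1 + |x|) * (1 + |y|)) :=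
          mul_le_mul (by linarith [abs_nonneg y]) h3 (abs_nonneg _) (by positivity)
      _ = K2 * (1 + |x|) * (1 + |y|) ^ 2 := by ring
  have iGY : ∀ t : ℝ, Integrable (fun y : ℝ =>
      G (Real.sqrt t * x + Real.sqrt (1 - t) * y) * gpdf v y) := fun t =>
    integrable_growth hv ((hGc.comp (by fun_prop)).aestronglyMeasurable) (M := Cg) (n := 0)
      (fun y => by simpa using hGb _)
  have iyG : ∀ t : ℝ, Integrable (fun y : ℝ =>
      y * G (Real.sqrt t * x + Real.sqrt (1 - t) * y) * gpdf v y) := fun t =>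
    integrable_growth hv ((continuous_id.mul (hGc.comp (by fun_prop))).aestronglyMeasurable)
      (M := Cg) (n := 1)
      (fun y => by
        rw [abs_mul]
        nlinarith [hGb (Real.sqrt t * x + Real.sqrt (1 - t) * y), abs_nonneg y, hCg,
          mul_le_mul_of_nonneg_left (hGb (Real.sqrt t * x + Real.sqrt (1 - t) * y)) (abs_nonneg y)])
  have iyyG : ∀ t : ℝ, Integrable (fun y : ℝ =>
      y * (y * G (Real.sqrt t * x + Real.sqrt (1 - t) * y)) * gpdf v y) := fun t =>
    integrable_growth hv
      ((continuous_id.mul (continuous_id.mul (hGc.comp (by fun_prop)))).aestronglyMeasurable)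
      (M := Cg) (n := 2)
      (fun y => by
        rw [abs_mul, abs_mul]
        nlinarith [hGb (Real.sqrt t * x + Real.sqrt (1 - t) * y), abs_nonneg y, hCg,
          mul_le_mul_of_nonneg_left (mul_le_mul_of_nonneg_left
            (hGb (Real.sqrt t * x + Real.sqrt (1 - t) * y)) (abs_nonneg y)) (abs_nonneg y),
          mul_nonneg hCg (abs_nonneg y),
          mul_nonneg (mul_nonneg hCg (abs_nonneg y)) (abs_nonneg y)])
  have iidρ : Integrable (fun y : ℝ => y * gpdf v y) :=
    integrable_growth hv (continuous_id.aestronglyMeasurable) (M := 1) (n := 1)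
      (fun y => by simp only [pow_one, one_mul]; linarith [abs_nonneg y])
  -- the J identity
  have hJt : ∀ t ∈ Set.Icc (0:ℝ) 1,
      J t = v * (1 - Real.sqrt (1 - t) * Real.sqrt (1 - t)) * Φ2 t
        - v * (Real.sqrt t * Real.sqrt (1 - t)) * x * Φ1 t
        - v * Real.sqrt (1 - t) * φ t := by
    intro t ht
    have hLid : ∀ z : ℝ, L z = v * G' z - z * G z + c := by
      intro z; rw [hG'def]; field_simp; ring
    have e : (fun y : ℝ => y * L (Real.sqrt t * x + Real.sqrt (1 - t) * y) * gpdf v y)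
        = fun y : ℝ => v * (y * G' (Real.sqrt t * x + Real.sqrt (1 - t) * y) * gpdf v y)
          - Real.sqrt t * x * (y * G (Real.sqrt t * x + Real.sqrt (1 - t) * y) * gpdf v y)
          - Real.sqrt (1 - t) * (y * (y * G (Real.sqrt t * x + Real.sqrt (1 - t) * y)) * gpdf v y)
          + c * (y * gpdf v y) := by
      funext y; rw [hLid]; ring
    have iA : Integrable (fun y : ℝ =>
        v * (y * G' (Real.sqrt t * x + Real.sqrt (1 - t) * y) * gpdf v y)) :=
      (iyG' t ht).const_mul v
    have iB : Integrable (fun y : ℝ =>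
        Real.sqrt t * x * (y * G (Real.sqrt t * x + Real.sqrt (1 - t) * y) * gpdf v y)) :=
      (iyG t).const_mul _
    have iC : Integrable (fun y : ℝ =>
        Real.sqrt (1 - t) * (y * (y * G (Real.sqrt t * x + Real.sqrt (1 - t) * y)) * gpdf v y)) :=
      (iyyG t).const_mul _
    have iD : Integrable (fun y : ℝ => c * (y * gpdf v y)) := iidρ.const_mul c
    have iAB : Integrable (fun y : ℝ =>
        v * (y * G' (Real.sqrt t * x + Real.sqrt (1 - t) * y) * gpdf v y)
        - Real.sqrt t * x * (y * G (Real.sqrt t * x + Real.sqrt (1 - t) * y) * gpdf v y)) :=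
      iA.sub iB
    have iABC : Integrable (fun y : ℝ =>
        v * (y * G' (Real.sqrt t * x + Real.sqrt (1 - t) * y) * gpdf v y)
        - Real.sqrt t * x * (y * G (Real.sqrt t * x + Real.sqrt (1 - t) * y) * gpdf v y)
        - Real.sqrt (1 - t) * (y * (y * G (Real.sqrt t * x + Real.sqrt (1 - t) * y)) * gpdf v y)) :=
      iAB.sub iC
    simp only [hJdef]
    rw [e, integral_add iABC iD, integral_sub iAB iC, integral_sub iA iB,
      integral_const_mul, integral_const_mul, integral_const_mul, integral_const_mul,
      ibpG (Real.sqrt t * x) (Real.sqrt (1 - t)), ibpyG (Real.sqrt t * x) (Real.sqrt (1 - t)),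
      integral_id_mul_gpdf hv]
    simp only [hφdef, hΦ1def, hΦ2def]
    ring
  -- continuity of φ
  have hφc : Continuous φ := by
    rw [hφdef]
    refine continuous_of_dominated (bound := fun y => Cg * gpdf v y)
      (fun t => ((hGc.comp (by fun_prop)).mul hρc).aestronglyMeasurable)
      (fun t => Filter.Eventually.of_forall fun y => ?_) ?_ ?_
    · rw [Real.norm_eq_abs, abs_mul, abs_of_nonneg (hρnn y)]
      exact mul_le_mul_of_nonneg_right (hGb _) (hρnn y)
    · exact integrable_growth hv aestronglyMeasurable_const (M := Cg) (n := 0)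
        (fun y => by rw [abs_of_nonneg hCg]; simp)
    · refine Filter.Eventually.of_forall fun y => ?_
      have hin : Continuous fun t : ℝ => Real.sqrt t * x + Real.sqrt (1 - t) * y :=
        ((Real.continuous_sqrt.mul continuous_const).add
          ((Real.continuous_sqrt.comp (continuous_const.sub continuous_id)).mul continuous_const))
      exact (hGc.comp hin).mul continuous_const
  have hφ1 : φ 1 = G x := by
    rw [hφdef]
    simp only [Real.sqrt_one, sub_self, Real.sqrt_zero, one_mul, zero_mul, add_zero]
    rw [integral_const_mul, integral_gpdf hv, mul_one]
  -- derivative of φ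
  have hφd : ∀ t ∈ Set.Ioo (0:ℝ) 1, HasDerivAt φ
      (x / (2 * Real.sqrt t) * Φ1 t - (2 * Real.sqrt (1 - t))⁻¹ * Φ2 t) t := by
    rintro t₀ ⟨ht0, ht1⟩
    have hs1 : 0 < Real.sqrt (t₀ / 2) := Real.sqrt_pos.mpr (by linarith)
    have hs2 : 0 < Real.sqrt ((1 - t₀) / 2) := Real.sqrt_pos.mpr (by linarith)
    have hε0 : 0 < min t₀ (1 - t₀) / 2 := div_pos (lt_min ht0 (by linarith)) two_pos
    have hball : ∀ u ∈ Metric.ball t₀ (min t₀ (1 - t₀) / 2),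
        t₀ / 2 ≤ u ∧ u ≤ 1 - (1 - t₀) / 2 := by
      intro u hu
      rw [Metric.mem_ball, Real.dist_eq, abs_lt] at hu
      have h1 := min_le_left t₀ (1 - t₀)
      have h2 := min_le_right t₀ (1 - t₀)
      exact ⟨by linarith [hu.1], by linarith [hu.2]⟩
    set κ : ℝ := |x| / (2 * Real.sqrt (t₀ / 2)) + (2 * Real.sqrt ((1 - t₀) / 2))⁻¹ with hκdef
    have hκ0 : 0 ≤ κ := by rw [hκdef]; positivity
    set Mb : ℝ := K2 * (1 + |x|) * κ with hMbdef
    have hMb0 : 0 ≤ Mb := by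
      rw [hMbdef]; exact mul_nonneg (mul_nonneg hK2 (by positivity)) hκ0
    have hbound : ∀ y : ℝ, ∀ u ∈ Metric.ball t₀ (min t₀ (1 - t₀) / 2),
        ‖G' (Real.sqrt u * x + Real.sqrt (1 - u) * y) *
          (x / (2 * Real.sqrt u) - y / (2 * Real.sqrt (1 - u))) * gpdf v y‖
          ≤ Mb * (1 + |y|) ^ 2 * gpdf v y := by
      intro y u hu
      obtain ⟨hu1, hu2⟩ := hball u hu
      have hu0 : 0 < u := lt_of_lt_of_le (by linarith) hu1
      have h1u : 0 < 1 - u := by linarith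
      have hsu : Real.sqrt (t₀ / 2) ≤ Real.sqrt u := Real.sqrt_le_sqrt hu1
      have hs1u : Real.sqrt ((1 - t₀) / 2) ≤ Real.sqrt (1 - u) := Real.sqrt_le_sqrt (by linarith)
      have hsup : 0 < Real.sqrt u := lt_of_lt_of_le hs1 hsu
      have hs1up : 0 < Real.sqrt (1 - u) := lt_of_lt_of_le hs2 hs1u
      have hG'bd : |G' (Real.sqrt u * x + Real.sqrt (1 - u) * y)| ≤ K2 * (1 + |x|) * (1 + |y|) := by
        have h1 := hG'b (Real.sqrt u * x + Real.sqrt (1 - u) * y)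
        have h2 := hYb u ⟨hu0.le, by linarith⟩ y
        nlinarith [mul_le_mul_of_nonneg_left h2 hK2,
          mul_nonneg (mul_nonneg hK2 (abs_nonneg x)) (abs_nonneg y)]
      have hDbd : |x / (2 * Real.sqrt u) - y / (2 * Real.sqrt (1 - u))| ≤ κ * (1 + |y|) := by
        have d1 : |x / (2 * Real.sqrt u) - y / (2 * Real.sqrt (1 - u))|
            ≤ |x| / (2 * Real.sqrt u) + |y| / (2 * Real.sqrt (1 - u)) := by
          calc |x / (2 * Real.sqrt u) - y / (2 * Real.sqrt (1 - u))|
              ≤ |x / (2 * Real.sqrt u)| + |y / (2 * Real.sqrt (1 - u))| := abs_sub _ _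
            _ = |x| / (2 * Real.sqrt u) + |y| / (2 * Real.sqrt (1 - u)) := by
                rw [abs_div, abs_div, abs_of_pos (by positivity : (0:ℝ) < 2 * Real.sqrt u),
                  abs_of_pos (by positivity : (0:ℝ) < 2 * Real.sqrt (1 - u))]
        have d2 : |x| / (2 * Real.sqrt u) ≤ |x| / (2 * Real.sqrt (t₀ / 2)) := by
          gcongr
        have d3 : |y| / (2 * Real.sqrt (1 - u)) ≤ |y| / (2 * Real.sqrt ((1 - t₀) / 2)) := by
          gcongr
        rw [hκdef]
        have e3 : |y| / (2 * Real.sqrt ((1 - t₀) / 2))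
            = (2 * Real.sqrt ((1 - t₀) / 2))⁻¹ * |y| := by ring
        nlinarith [abs_nonneg x, abs_nonneg y,
          mul_nonneg (div_nonneg (abs_nonneg x) (by positivity : (0:ℝ) ≤ 2 * Real.sqrt (t₀ / 2)))
            (abs_nonneg y),
          inv_nonneg.mpr (by positivity : (0:ℝ) ≤ 2 * Real.sqrt ((1 - t₀) / 2))]
      rw [Real.norm_eq_abs, abs_mul, abs_mul, abs_of_nonneg (hρnn y)]
      have hcomb := mul_le_mul hG'bd hDbd (abs_nonneg _)
        (by positivity : (0:ℝ) ≤ K2 * (1 + |x|) * (1 + |y|))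
      calc |G' (Real.sqrt u * x + Real.sqrt (1 - u) * y)| *
            |x / (2 * Real.sqrt u) - y / (2 * Real.sqrt (1 - u))| * gpdf v y
          ≤ K2 * (1 + |x|) * (1 + |y|) * (κ * (1 + |y|)) * gpdf v y :=
            mul_le_mul_of_nonneg_right hcomb (hρnn y)
        _ = Mb * (1 + |y|) ^ 2 * gpdf v y := by rw [hMbdef]; ring
    have hdiff : ∀ y : ℝ, ∀ u ∈ Metric.ball t₀ (min t₀ (1 - t₀) / 2),
        HasDerivAt (fun t : ℝ => G (Real.sqrt t * x + Real.sqrt (1 - t) * y) * gpdf v y)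
          (G' (Real.sqrt u * x + Real.sqrt (1 - u) * y) *
            (x / (2 * Real.sqrt u) - y / (2 * Real.sqrt (1 - u))) * gpdf v y) u := by
      intro y u hu
      obtain ⟨hu1, hu2⟩ := hball u hu
      have hu0 : 0 < u := lt_of_lt_of_le (by linarith) hu1
      have h1u : 0 < 1 - u := by linarith
      have hA : HasDerivAt (fun t : ℝ => Real.sqrt t * x) (1 / (2 * Real.sqrt u) * x) u :=
        (Real.hasDerivAt_sqrt (ne_of_gt hu0)).mul_const x
      have hB0 : HasDerivAt (fun t : ℝ => 1 - t) (-1) u := by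
        simpa using (hasDerivAt_id u).const_sub 1
      have hB1 : HasDerivAt (fun t : ℝ => Real.sqrt (1 - t))
          (1 / (2 * Real.sqrt (1 - u)) * (-1)) u := by
        have := (Real.hasDerivAt_sqrt (ne_of_gt h1u)).comp u hB0
        simpa [Function.comp_def] using this
      have hY : HasDerivAt (fun t : ℝ => Real.sqrt t * x + Real.sqrt (1 - t) * y)
          (1 / (2 * Real.sqrt u) * x + 1 / (2 * Real.sqrt (1 - u)) * (-1) * y) u :=
        hA.add (hB1.mul_const y)
      have hout : HasDerivAt (fun t : ℝ => G (Real.sqrt t * x + Real.sqrt (1 - t) * y))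
          (G' (Real.sqrt u * x + Real.sqrt (1 - u) * y) *
            (1 / (2 * Real.sqrt u) * x + 1 / (2 * Real.sqrt (1 - u)) * (-1) * y)) u := by
        simpa [Function.comp_def] using
          (hGder (Real.sqrt u * x + Real.sqrt (1 - u) * y)).comp u hY
      have := hout.mul_const (gpdf v y)
      refine this.congr_deriv ?_
      ring
    have hDer := hasDerivAt_integral_of_dominated_loc_of_deriv_le (μ := (volume : Measure ℝ))
      (F := fun t y => G (Real.sqrt t * x + Real.sqrt (1 - t) * y) * gpdf v y)
      (F' := fun t y => G' (Real.sqrt t * x + Real.sqrt (1 - t) * y) *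
        (x / (2 * Real.sqrt t) - y / (2 * Real.sqrt (1 - t))) * gpdf v y)
      (x₀ := t₀) (bound := fun y => Mb * (1 + |y|) ^ 2 * gpdf v y)
      (Metric.ball_mem_nhds t₀ hε0)
      (Filter.Eventually.of_forall fun u =>
        ((hGc.comp (by fun_prop)).mul hρc).aestronglyMeasurable)
      (iGY t₀)
      ((((hG'c.comp (by fun_prop)).mul
        (continuous_const.sub (continuous_id.div_const _))).mul hρc).aestronglyMeasurable)
      (Filter.Eventually.of_forall fun y u hu => hbound y u hu)
      (integrable_growth hv
        ((continuous_const.mul ((continuous_const.add continuous_abs).pow 2)).aestronglyMeasurable)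
        (M := Mb) (n := 2)
        (fun y => le_of_eq (abs_of_nonneg (mul_nonneg hMb0 (by positivity)))))
      (Filter.Eventually.of_forall fun y u hu => hdiff y u hu)
    have key2 := hDer.2
    have hsplit : (∫ y : ℝ, G' (Real.sqrt t₀ * x + Real.sqrt (1 - t₀) * y) *
          (x / (2 * Real.sqrt t₀) - y / (2 * Real.sqrt (1 - t₀))) * gpdf v y)
        = x / (2 * Real.sqrt t₀) * Φ1 t₀ - (2 * Real.sqrt (1 - t₀))⁻¹ * Φ2 t₀ := by
      have i1 := (iG' t₀ ⟨ht0.le, ht1.le⟩).const_mul (x / (2 * Real.sqrt t₀))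
      have i2 := (iyG' t₀ ⟨ht0.le, ht1.le⟩).const_mul ((2 * Real.sqrt (1 - t₀))⁻¹)
      rw [show (fun y : ℝ => G' (Real.sqrt t₀ * x + Real.sqrt (1 - t₀) * y) *
            (x / (2 * Real.sqrt t₀) - y / (2 * Real.sqrt (1 - t₀))) * gpdf v y)
          = fun y : ℝ => x / (2 * Real.sqrt t₀) *
              (G' (Real.sqrt t₀ * x + Real.sqrt (1 - t₀) * y) * gpdf v y)
            - (2 * Real.sqrt (1 - t₀))⁻¹ *
              (y * G' (Real.sqrt t₀ * x + Real.sqrt (1 - t₀) * y) * gpdf v y) from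
        funext fun y => by ring]
      rw [integral_sub i1 i2, integral_const_mul, integral_const_mul]
    rw [hφdef, ← hsplit]
    exact key2
  -- derivative of t ↦ √t * φ t
  have hFd : ∀ t ∈ Set.Ioo (0:ℝ) 1, HasDerivAt (fun u : ℝ => Real.sqrt u * φ u)
      (-v⁻¹ * ((2 * Real.sqrt (t * (1 - t)))⁻¹ * J t)) t := by
    rintro t ⟨ht0, ht1⟩
    have hst : 0 < Real.sqrt t := Real.sqrt_pos.mpr ht0
    have hrt : 0 < Real.sqrt (1 - t) := Real.sqrt_pos.mpr (by linarith)
    have hd := (Real.hasDerivAt_sqrt (ne_of_gt ht0)).mul (hφd t ⟨ht0, ht1⟩)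
    refine hd.congr_deriv ?_
    symm
    rw [hJt t ⟨ht0.le, ht1.le⟩, Real.sqrt_mul ht0.le]
    rw [show (1 : ℝ) - Real.sqrt (1 - t) * Real.sqrt (1 - t) = Real.sqrt t * Real.sqrt t from by
      rw [Real.mul_self_sqrt ht0.le, Real.mul_self_sqrt (by linarith : (0:ℝ) ≤ 1 - t)]; ring]
    exact steinAlg v (Real.sqrt t) (Real.sqrt (1 - t)) (Φ1 t) (Φ2 t) (φ t) x hvne
      (ne_of_gt hst) (ne_of_gt hrt)
  -- the J bound and integrability of the integrand
  have hJb : ∀ t : ℝ, |J t| ≤ v * Real.sqrt (1 - t) * C1 := by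
    intro t
    have hIL : |∫ y : ℝ, L' (Real.sqrt t * x + Real.sqrt (1 - t) * y) * gpdf v y| ≤ C1 := by
      have hint : Integrable (fun y : ℝ =>
          L' (Real.sqrt t * x + Real.sqrt (1 - t) * y) * gpdf v y) :=
        integrable_growth hv ((hL'c.comp (by fun_prop)).aestronglyMeasurable) (M := C1) (n := 0)
          (fun y => by simpa using hL'b _)
      calc |∫ y : ℝ, L' (Real.sqrt t * x + Real.sqrt (1 - t) * y) * gpdf v y|
          ≤ ∫ y : ℝ, |L' (Real.sqrt t * x + Real.sqrt (1 - t) * y) * gpdf v y| := by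
            simpa only [Real.norm_eq_abs] using norm_integral_le_integral_norm
              (μ := (volume : Measure ℝ))
              (fun y : ℝ => L' (Real.sqrt t * x + Real.sqrt (1 - t) * y) * gpdf v y)
        _ ≤ ∫ y : ℝ, C1 * gpdf v y := by
            refine integral_mono hint.abs (integrable_growth hv aestronglyMeasurable_const
              (M := C1) (n := 0) (fun y => by rw [abs_of_nonneg hC1]; simp)) ?_
            intro y
            dsimp only
            rw [abs_mul, abs_of_nonneg (hρnn y)]
            exact mul_le_mul_of_nonneg_right (hL'b _) (hρnn y)
        _ = C1 := by rw [integral_const_mul, integral_gpdf hv, mul_one]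
    have e : J t = v * (Real.sqrt (1 - t) *
        ∫ y : ℝ, L' (Real.sqrt t * x + Real.sqrt (1 - t) * y) * gpdf v y) := by
      simp only [hJdef]
      exact ibpL (Real.sqrt t * x) (Real.sqrt (1 - t))
    rw [e, abs_mul, abs_mul, abs_of_pos hv, abs_of_nonneg (Real.sqrt_nonneg _)]
    calc v * (Real.sqrt (1 - t) *
          |∫ y : ℝ, L' (Real.sqrt t * x + Real.sqrt (1 - t) * y) * gpdf v y|)
        ≤ v * (Real.sqrt (1 - t) * C1) :=
          mul_le_mul_of_nonneg_left (mul_le_mul_of_nonneg_left hIL (Real.sqrt_nonneg _)) hv.le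
      _ = v * Real.sqrt (1 - t) * C1 := by ring
  have hJsm : StronglyMeasurable J := by
    have hcont : Continuous (fun p : ℝ × ℝ =>
        p.2 * L (Real.sqrt p.1 * x + Real.sqrt (1 - p.1) * p.2) * gpdf v p.2) := by
      refine (continuous_snd.mul (hLc.comp ?_)).mul (hρc.comp continuous_snd)
      exact ((Real.continuous_sqrt.comp continuous_fst).mul continuous_const).add
        ((Real.continuous_sqrt.comp (continuous_const.sub continuous_fst)).mul continuous_snd)
    have := hcont.stronglyMeasurable.integral_prod_right' (ν := (volume : Measure ℝ))
    rw [hJdef]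
    exact this
  have hIm : AEStronglyMeasurable
      (fun t : ℝ => -v⁻¹ * ((2 * Real.sqrt (t * (1 - t)))⁻¹ * J t))
      (volume.restrict (Set.uIoc (0:ℝ) 1)) := by
    apply Measurable.aestronglyMeasurable
    have m1 : Measurable fun t : ℝ => (2 * Real.sqrt (t * (1 - t)))⁻¹ :=
      ((continuous_const.mul (Real.continuous_sqrt.comp
        (continuous_id.mul (continuous_const.sub continuous_id)))).measurable).inv
    exact (m1.mul hJsm.measurable).const_mul _
  have hIint : IntervalIntegrable
      (fun t : ℝ => -v⁻¹ * ((2 * Real.sqrt (t * (1 - t)))⁻¹ * J t)) volume 0 1 := by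
    have hdom : IntervalIntegrable (fun t : ℝ => C1 / 2 * t ^ (-(1/2) : ℝ)) volume 0 1 :=
      (intervalIntegral.intervalIntegrable_rpow' (by norm_num)).const_mul _
    refine hdom.mono_fun hIm ?_
    rw [Set.uIoc_of_le (zero_le_one (α := ℝ))]
    refine (ae_restrict_iff' measurableSet_Ioc).mpr (Filter.Eventually.of_forall fun t ht => ?_)
    rcases eq_or_lt_of_le ht.2 with h1 | h1
    · subst h1
      simp only [Real.norm_eq_abs]
      have e0 : (1:ℝ) * (1 - 1) = 0 := by norm_num
      rw [e0, Real.sqrt_zero, mul_zero, inv_zero, zero_mul, mul_zero, abs_zero]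
      positivity
    · have hJ1 := hJb t
      have hst : 0 < Real.sqrt t := Real.sqrt_pos.mpr ht.1
      have hrt : 0 < Real.sqrt (1 - t) := Real.sqrt_pos.mpr (by linarith)
      have e1 : Real.sqrt (t * (1 - t)) = Real.sqrt t * Real.sqrt (1 - t) :=
        Real.sqrt_mul ht.1.le _
      have e2 : t ^ (-(1/2) : ℝ) = (Real.sqrt t)⁻¹ := by
        rw [Real.rpow_neg ht.1.le, Real.sqrt_eq_rpow]
      simp only [Real.norm_eq_abs]
      rw [e1, abs_mul, abs_neg,
        abs_of_pos (inv_pos.mpr hv), abs_mul,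
        abs_of_nonneg (inv_nonneg.mpr (by positivity : (0:ℝ) ≤ 2 * (Real.sqrt t * Real.sqrt (1 - t))))]
      have hkey : v⁻¹ * ((2 * (Real.sqrt t * Real.sqrt (1 - t)))⁻¹ * (v * Real.sqrt (1 - t) * C1))
          = C1 / 2 * (Real.sqrt t)⁻¹ := by
        field_simp
      have hRHS : |C1 / 2 * t ^ (-(1/2) : ℝ)| = C1 / 2 * (Real.sqrt t)⁻¹ := by
        rw [abs_of_nonneg (mul_nonneg (by linarith) (Real.rpow_nonneg ht.1.le _)), e2]
      rw [hRHS, ← hkey]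
      exact mul_le_mul_of_nonneg_left (mul_le_mul_of_nonneg_left hJ1 (by positivity))
        (by positivity)
  -- fundamental theorem of calculus
  have hFcont : ContinuousOn (fun u : ℝ => Real.sqrt u * φ u) (Set.Icc 0 1) :=
    (Real.continuous_sqrt.mul hφc).continuousOn
  have hFTC := intervalIntegral.integral_eq_sub_of_hasDerivAt_of_le zero_le_one hFcont hFd hIint
  have hval : (∫ t in (0:ℝ)..1, -v⁻¹ * ((2 * Real.sqrt (t * (1 - t)))⁻¹ * J t)) = G x := by
    rw [hFTC]
    simp [hφ1]
  have goal' : G x = -v⁻¹ * ∫ t in (0:ℝ)..1, (2 * Real.sqrt (t * (1 - t)))⁻¹ * J t := by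
    rw [← intervalIntegral.integral_const_mul, ← hval]
  simpa only [hJdef] using goal'

end SteinAux


/-- **Uniqueness in Lemma `SolStein0`**: any bounded solution `g` of the Stein equation,
differentiable in its first variable, coincides with the Stein solution `f_l`. -/
theorem steinSol_unique_bounded_solution
    {Ω : Type*} [MeasurableSpace Ω] (P : Measure Ω) [IsProbabilityMeasure P]
    (σ : ℝ) (hσ : 0 < σ) (X : Ω → ℝ) (hX : Measurable X)
    (hlaw : Measure.map X P = gaussianReal 0 (Real.toNNReal (σ ^ 2)))
    (l : ℝ × ℝ → ℝ) (hl : ContDiff ℝ 1 l)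
    (hb1 : ∃ C, ∀ p, |pderiv1 l p| ≤ C) (hb2 : ∃ C, ∀ p, |pderiv2 l p| ≤ C)
    (g : ℝ × ℝ → ℝ) (hgb : ∃ C, ∀ p, |g p| ≤ C)
    (hgd : ∀ p : ℝ × ℝ, DifferentiableAt ℝ (fun y => g (y, p.2)) p.1)
    (hgeq : ∀ x₁ x₂ : ℝ,
      σ ^ 2 * pderiv1 g (x₁, x₂) - x₁ * g (x₁, x₂) = l (x₁, x₂) - ∫ ω, l (X ω, x₂) ∂P) :
    g = steinSol P X σ l := by
  obtain ⟨C1, hC1⟩ := hb1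
  obtain ⟨Cg, hCg⟩ := hgb
  have hv : 0 < σ ^ 2 := by positivity
  have hvne : σ ^ 2 ≠ 0 := ne_of_gt hv
  funext p
  obtain ⟨x, x₂⟩ := p
  have hld : ∀ y : ℝ, HasDerivAt (fun z => l (z, x₂)) ((fderiv ℝ l (y, x₂)) (1, 0)) y := by
    intro y
    exact ((hl.differentiable one_ne_zero) (y, x₂)).hasFDerivAt.comp_hasDerivAt y
      ((hasDerivAt_id y).prodMk (hasDerivAt_const y x₂))
  have hpd : ∀ y : ℝ, pderiv1 l (y, x₂) = (fderiv ℝ l (y, x₂)) (1, 0) := fun y => (hld y).deriv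
  have hL'c : Continuous (fun y : ℝ => pderiv1 l (y, x₂)) := by
    have hc : Continuous (fun y : ℝ => (fderiv ℝ l (y, x₂)) (1, 0)) :=
      ((hl.continuous_fderiv one_ne_zero).comp
        (continuous_id.prodMk continuous_const)).clm_apply continuous_const
    simp only [hpd]
    exact hc
  have hL' : ∀ y : ℝ, HasDerivAt (fun z => l (z, x₂)) (pderiv1 l (y, x₂)) y := fun y =>
    (hpd y) ▸ hld y
  have hL'b : ∀ y : ℝ, |pderiv1 l (y, x₂)| ≤ C1 := fun y => hC1 (y, x₂)
  have hGb : ∀ y : ℝ, |g (y, x₂)| ≤ Cg := fun y => hCg (y, x₂)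
  have hGd : ∀ y : ℝ, HasDerivAt (fun z => g (z, x₂))
      ((σ ^ 2)⁻¹ * (l (y, x₂) - (∫ ω, l (X ω, x₂) ∂P) + y * g (y, x₂))) y := by
    intro y
    have hdiff : DifferentiableAt ℝ (fun z => g (z, x₂)) y := hgd (y, x₂)
    have heq := hgeq y x₂
    have h2 : pderiv1 g (y, x₂) = deriv (fun z => g (z, x₂)) y := rfl
    rw [h2] at heq
    have hderiv : deriv (fun z => g (z, x₂)) y
        = (σ ^ 2)⁻¹ * (l (y, x₂) - (∫ ω, l (X ω, x₂) ∂P) + y * g (y, x₂)) := by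
      field_simp
      linarith [heq]
    exact hderiv ▸ hdiff.hasDerivAt
  have htrans : ∀ t : ℝ, (∫ ω, X ω * l (Real.sqrt t * x + Real.sqrt (1 - t) * X ω, x₂) ∂P)
      = ∫ y, y * l (Real.sqrt t * x + Real.sqrt (1 - t) * y, x₂) * SteinAux.gpdf (σ ^ 2) y := by
    intro t
    have hfc : Continuous (fun y : ℝ => y * l (Real.sqrt t * x + Real.sqrt (1 - t) * y, x₂)) :=
      continuous_id.mul (hl.continuous.comp
        ((continuous_const.add (continuous_const.mul continuous_id)).prodMk continuous_const))
    calc (∫ ω, X ω * l (Real.sqrt t * x + Real.sqrt (1 - t) * X ω, x₂) ∂P)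
        = ∫ y, y * l (Real.sqrt t * x + Real.sqrt (1 - t) * y, x₂) ∂(Measure.map X P) :=
          (integral_map hX.aemeasurable hfc.aestronglyMeasurable).symm
      _ = ∫ y, y * l (Real.sqrt t * x + Real.sqrt (1 - t) * y, x₂)
            ∂(gaussianReal 0 (Real.toNNReal (σ ^ 2))) := by rw [hlaw]
      _ = ∫ y, y * l (Real.sqrt t * x + Real.sqrt (1 - t) * y, x₂) * SteinAux.gpdf (σ ^ 2) y :=
          SteinAux.integral_gauss_transfer hv
            (fun y : ℝ => y * l (Real.sqrt t * x + Real.sqrt (1 - t) * y, x₂))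
  have hkey := SteinAux.key hv (fun y => l (y, x₂)) (fun y => pderiv1 l (y, x₂))
    (fun y => g (y, x₂)) (∫ ω, l (X ω, x₂) ∂P) C1 Cg hL' hL'c hL'b hGb hGd x
  show g (x, x₂) = -(σ ^ 2)⁻¹ *
    ∫ t in (0:ℝ)..1, (2 * Real.sqrt (t * (1 - t)))⁻¹ *
      ∫ ω, X ω * l (Real.sqrt t * x + Real.sqrt (1 - t) * X ω, x₂) ∂P
  simp only [htrans]
  exact hkey
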